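/- (Correctability implications, part 2.) If ∀ x ∈ F₂^V, 1_T·H·x = 0 → x = 0, then ∀ x ∈ F₂^V, H·1_B·x = 0 → 1_B·x = 0. If ∀ y ∈ F₂^C, 1_S·Hᵗ·y = 0 → y = 0, then ∀ y ∈ F₂^C, Hᵗ·1_A·y = 0 → 1_A·y = 0. -/

import Mathlib

open Matrix Kronecker

variable {V C : Type*} [Fintype V] [Fintype C] [DecidableEq V] [DecidableEq C]

/-- X-stabilizer matrix `H_X = (1_V ⊗ H | Hᵗ ⊗ 1_C)` of the hypergraph product of `H`
with itself. Rows are indexed by `V × C`, column blocks by `V × V` and `C × C`. -/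
def HX (H : Matrix C V (ZMod 2)) : Matrix (V × C) ((V × V) ⊕ (C × C)) (ZMod 2) :=
  Matrix.fromCols ((1 : Matrix V V (ZMod 2)) ⊗ₖ H) (Hᵀ ⊗ₖ (1 : Matrix C C (ZMod 2)))

/-- Z-stabilizer matrix `H_Z = (H ⊗ 1_V | 1_C ⊗ Hᵗ)`. Rows are indexed by `C × V`. -/
def HZ (H : Matrix C V (ZMod 2)) : Matrix (C × V) ((V × V) ⊕ (C × C)) (ZMod 2) :=
  Matrix.fromCols (H ⊗ₖ (1 : Matrix V V (ZMod 2))) ((1 : Matrix C C (ZMod 2)) ⊗ₖ Hᵀ)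

/-- Diagonal 0–1 projector matrix `1_P` onto a subset `P`. -/
def projM {α : Type*} [Fintype α] [DecidableEq α] (P : Finset α) : Matrix α α (ZMod 2) :=
  Matrix.diagonal fun a => if a ∈ P then 1 else 0

/-- Neighborhood `N = {c ∈ C : ∃ v ∈ S, H c v = 1}` of a set `S` of variable nodes. -/
def Nbhd (H : Matrix C V (ZMod 2)) (S : Finset V) : Finset C :=
  @Finset.filter _ (fun c => ∃ v ∈ S, H c v = 1) (fun _ => inferInstance) Finset.univ

/-- Ancestor `A = {c ∈ C : ∀ v, H c v = 1 → v ∈ S}` of a set `S` of variable nodes. -/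
def Anc (H : Matrix C V (ZMod 2)) (S : Finset V) : Finset C :=
  @Finset.filter _ (fun c => ∀ v, H c v = 1 → v ∈ S) (fun _ => inferInstance) Finset.univ

/-- Neighborhood `M = {v ∈ V : ∃ c ∈ T, H c v = 1}` of a set `T` of check nodes. -/
def NbhdT (H : Matrix C V (ZMod 2)) (T : Finset C) : Finset V :=
  Finset.univ.filter fun v => ∃ c ∈ T, H c v = 1

/-- Ancestor `B = {v ∈ V : ∀ c, H c v = 1 → c ∈ T}` of a set `T` of check nodes. -/
def AncT (H : Matrix C V (ZMod 2)) (T : Finset C) : Finset V :=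
  Finset.univ.filter fun v => ∀ c, H c v = 1 → c ∈ T

/-- Smooth-puncture X matrix `H_X' = (1_B ⊗ H_S | H_Tᵗ ⊗ 1_A)`,
where `H_S = H·1_S` and `H_T = 1_T·H`. -/
def HX' (H : Matrix C V (ZMod 2)) (S : Finset V) (T : Finset C) :
    Matrix (V × C) ((V × V) ⊕ (C × C)) (ZMod 2) :=
  Matrix.fromCols (projM (AncT H T) ⊗ₖ (H * projM S)) ((projM T * H)ᵀ ⊗ₖ projM (Anc H S))

/-- Smooth-puncture Z matrix `H_Z' = (H_T ⊗ 1_S | 1_T ⊗ H_Sᵗ)`. -/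
def HZ' (H : Matrix C V (ZMod 2)) (S : Finset V) (T : Finset C) :
    Matrix (C × V) ((V × V) ⊕ (C × C)) (ZMod 2) :=
  Matrix.fromCols ((projM T * H) ⊗ₖ projM S) (projM T ⊗ₖ (H * projM S)ᵀ)

/-- Correctability implications, part 2: if `1_T·H` has trivial kernel then no nonzero
codeword of `H` is supported on `B`; likewise for `1_S·Hᵗ` and `A`. -/
theorem stmt_10 (H : Matrix C V (ZMod 2)) (S : Finset V) (T : Finset C) :
    ((∀ x : V → ZMod 2, (projM T * H).mulVec x = 0 → x = 0) →
      ∀ x : V → ZMod 2, (H * projM (AncT H T)).mulVec x = 0 → (projM (AncT H T)).mulVec x = 0) ∧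
    ((∀ y : C → ZMod 2, (projM S * Hᵀ).mulVec y = 0 → y = 0) →
      ∀ y : C → ZMod 2, (Hᵀ * projM (Anc H S)).mulVec y = 0 → (projM (Anc H S)).mulVec y = 0) := by
  constructor
  · intro h x hx
    apply h
    have : (projM T * H).mulVec ((projM (AncT H T)).mulVec x) =
        (projM T).mulVec ((H * projM (AncT H T)).mulVec x) := by
      simp [Matrix.mulVec_mulVec, Matrix.mul_assoc]
    rw [this, hx, Matrix.mulVec_zero]
  · intro h y hy
    apply h
    have : (projM S * Hᵀ).mulVec ((projM (Anc H S)).mulVec y) =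
        (projM S).mulVec ((Hᵀ * projM (Anc H S)).mulVec y) := by
      simp [Matrix.mulVec_mulVec, Matrix.mul_assoc]
    rw [this, hy, Matrix.mulVec_zero]
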